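/- Let G be a finite perfect group (its commutator subgroup equals G) and let E be a representation group of G, i.e., there is a surjective group homomorphism π : E → G with E finite and ker π ⊆ Z(E) ∩ [E,E] (a stem extension), such that |E| ≥ |F| for every finite group F admitting a surjective homomorphism π' : F → G with ker π' ⊆ Z(F) ∩ [F,F]. Then H²(E, ℂˣ) = 1: every 2-cocycle β : E × E → ℂˣ is a 2-coboundary of E. -/

import Mathlib

/-- Conjugation: `g^x = x⁻¹ * g * x`. -/
def cjg {G : Type*} [Group G] (g x : G) : G := x⁻¹ * g * x

/-- A normalized 3-cocycle on `G` with values in `ℂˣ`. -/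
def IsNormalized3Cocycle {G : Type*} [Group G] (ω : G → G → G → ℂˣ) : Prop :=
  (∀ x y z w, ω y z w * ω x (y * z) w * ω x y z = ω (x * y) z w * ω x y (z * w)) ∧
  (∀ x y z, (x = 1 ∨ y = 1 ∨ z = 1) → ω x y z = 1)

/-- `θ_g(x,y) = ω(g,x,y)·ω(x,y,g^{xy}) / ω(x,g^x,y)`. -/
def theta {G : Type*} [Group G] (ω : G → G → G → ℂˣ) (g x y : G) : ℂˣ :=
  ω g x y * ω x y (cjg g (x * y)) / ω x (cjg g x) y

/-- `γ_g(x,y) = ω(x,y,g)·ω(g,x^g,y^g) / ω(x,g,y^g)`. -/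
def gam {G : Type*} [Group G] (ω : G → G → G → ℂˣ) (g x y : G) : ℂˣ :=
  ω x y g * ω g (cjg x g) (cjg y g) / ω x g (cjg y g)

/-- A 2-coboundary of `G` with values in `ℂˣ`. -/
def Is2Coboundary {G : Type*} [Group G] (β : G → G → ℂˣ) : Prop :=
  ∃ f : G → ℂˣ, f 1 = 1 ∧ ∀ x y, β x y = f x * f y / f (x * y)

/-- A (normalized) 2-cocycle of `G` with values in `ℂˣ`. -/
def Is2Cocycle {G : Type*} [Group G] (β : G → G → ℂˣ) : Prop :=
  (∀ x, β x 1 = 1 ∧ β 1 x = 1) ∧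
  (∀ x y z, β x y * β (x * y) z = β y z * β x (y * z))

/-- An ω-admissible pair `(τ, ν)` for a subgroup `A`. -/
def IsAdmissiblePair {G : Type*} [Group G] (ω : G → G → G → ℂˣ) (A : Subgroup G)
    (τ : A → G → ℂˣ) (ν : A → (G →* ℂˣ)) : Prop :=
  (∀ x, τ 1 x = 1) ∧ (∀ a, τ a 1 = 1) ∧
  (∀ (a : A) (x y : G), theta ω (a : G) x y = τ a x * τ a y / τ a (x * y)) ∧
  (ν 1 = 1) ∧
  (∀ (a b : A) (g : G),
    theta ω g (a : G) (b : G) * (τ a g * τ b g / τ (a * b) g)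
      = ν a g * ν b g / ν (a * b) g)



/-- Unit equality from value equality helper. -/
private lemma uval {a b : ℂˣ} (h : a = b) : (a : ℂ) = (b : ℂ) := congrArg Units.val h

/-- A normalized 2-cocycle with values in the `n`-th roots of unity. -/
structure NCocycle (E : Type) [Group E] (n : ℕ) where
  b : E → E → ℂˣ
  norm1 : ∀ x, b x 1 = 1
  norm2 : ∀ x, b 1 x = 1
  coc : ∀ x y z, b x y * b (x * y) z = b y z * b x (y * z)
  tors : ∀ x y, b x y ∈ rootsOfUnity n ℂ

namespace NCocycle

variable {E : Type} [Group E] {n : ℕ} (c : NCocycle E n)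

lemma inv_symm (x : E) : c.b x⁻¹ x = c.b x x⁻¹ := by
  have h := c.coc x x⁻¹ x
  simpa [c.norm1, c.norm2] using h.symm

/-- The twisted product. -/
@[ext] structure Tw (c : NCocycle E n) : Type where
  base : E
  fib : rootsOfUnity n ℂ

instance : Group (Tw c) where
  mul p q := ⟨p.base * q.base, p.fib * q.fib * ⟨c.b p.base q.base, c.tors _ _⟩⟩
  one := ⟨1, 1⟩
  inv p := ⟨p.base⁻¹, (p.fib * ⟨c.b p.base p.base⁻¹, c.tors _ _⟩)⁻¹⟩
  mul_assoc p q r := by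
    refine Tw.ext (mul_assoc _ _ _) ?_
    show (p.fib * q.fib * ⟨_, c.tors p.base q.base⟩) * r.fib
          * ⟨_, c.tors (p.base * q.base) r.base⟩
        = p.fib * (q.fib * r.fib * ⟨_, c.tors q.base r.base⟩)
          * ⟨_, c.tors p.base (q.base * r.base)⟩
    have h := uval (c.coc p.base q.base r.base)
    refine Subtype.ext (Units.ext ?_)
    push_cast at h ⊢
    linear_combination (((p.fib : ℂˣ) : ℂ) * ((q.fib : ℂˣ) : ℂ) * ((r.fib : ℂˣ) : ℂ)) * h
  one_mul p := by
    refine Tw.ext (one_mul _) ?_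
    show (1 : rootsOfUnity n ℂ) * p.fib * ⟨_, c.tors 1 p.base⟩ = p.fib
    refine Subtype.ext (Units.ext ?_)
    push_cast [c.norm2]
    ring
  mul_one p := by
    refine Tw.ext (mul_one _) ?_
    show p.fib * 1 * ⟨_, c.tors p.base 1⟩ = p.fib
    refine Subtype.ext (Units.ext ?_)
    push_cast [c.norm1]
    ring
  inv_mul_cancel p := by
    refine Tw.ext (inv_mul_cancel _) ?_
    show (p.fib * ⟨_, c.tors p.base p.base⁻¹⟩)⁻¹ * p.fib * ⟨_, c.tors p.base⁻¹ p.base⟩ = 1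
    refine Subtype.ext (Units.ext ?_)
    push_cast [c.inv_symm]
    field_simp

/-- Projection to the base. -/
def fst : Tw c →* E where
  toFun := Tw.base
  map_one' := rfl
  map_mul' _ _ := rfl

lemma fst_surjective : Function.Surjective c.fst := fun e => ⟨⟨e, 1⟩, rfl⟩

lemma ker_fst_le_center : c.fst.ker ≤ Subgroup.center (Tw c) := by
  intro x hx
  have hb : x.base = 1 := hx
  rw [Subgroup.mem_center_iff]
  intro g
  refine Tw.ext ?_ (Subtype.ext ?_)
  · show g.base * x.base = x.base * g.base
    rw [hb, mul_one, one_mul]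
  · show ((g.fib * x.fib * ⟨_, c.tors g.base x.base⟩ : rootsOfUnity n ℂ) : ℂˣ)
      = ((x.fib * g.fib * ⟨_, c.tors x.base g.base⟩ : rootsOfUnity n ℂ) : ℂˣ)
    refine Units.ext ?_
    rw [hb]
    push_cast [c.norm1, c.norm2]
    ring

instance [Finite E] [NeZero n] : Finite (Tw c) :=
  Finite.of_equiv (E × rootsOfUnity n ℂ)
    ⟨fun p => ⟨p.1, p.2⟩, fun t => ⟨t.base, t.fib⟩, fun _ => rfl, fun _ => rfl⟩

end NCocycle

section Splitting

open scoped commutatorElement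

variable {F : Type} [Group F]

private lemma comm_center_right (a k c : F) (hk : k ∈ Subgroup.center F) :
    ⁅a * k, c⁆ = ⁅a, c⁆ := by
  have h : c * k = k * c := Subgroup.mem_center_iff.mp hk c
  simp only [commutatorElement_def, mul_inv_rev]
  have h2 : a * k * c = a * c * k := by rw [mul_assoc, ← h, mul_assoc]
  rw [h2]
  group

private lemma comm_center_left (a c l : F) (hl : l ∈ Subgroup.center F) :
    ⁅c, a * l⁆ = ⁅c, a⁆ := by
  rw [← commutatorElement_inv (a * l) c, comm_center_right a l c hl, commutatorElement_inv]

/-- Any finite central extension of a representation group `E` of a perfect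
group `G` splits. -/
theorem central_ext_splits {G E : Type} [Group G] [Finite G] [Group E] [Finite E] [Finite F]
    (hG : commutator G = ⊤)
    (π : E →* G) (hsurj : Function.Surjective π)
    (hstem : π.ker ≤ Subgroup.center E ⊓ commutator E)
    (hmax : ∀ (F : Type) [Group F] [Finite F] (π' : F →* G),
      Function.Surjective π' → π'.ker ≤ Subgroup.center F ⊓ commutator F →
      Nat.card F ≤ Nat.card E)
    (p : F →* E) (hp : Function.Surjective p) (hcen : p.ker ≤ Subgroup.center F) :
    ∃ s : E →* F, ∀ x, p (s x) = x := by
  classical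
  -- E is perfect
  have hE : commutator E = ⊤ := by
    rw [eq_top_iff]
    intro e _
    have hmap : Subgroup.map π (commutator E) = ⊤ := by
      rw [commutator_def, Subgroup.map_commutator, Subgroup.map_top_of_surjective π hsurj,
        ← commutator_def, hG]
    have hmem : π e ∈ Subgroup.map π (commutator E) := by rw [hmap]; trivial
    obtain ⟨d, hdmem, hdeq⟩ := Subgroup.mem_map.mp hmem
    have hker : d⁻¹ * e ∈ π.ker := by
      rw [MonoidHom.mem_ker, map_mul, map_inv, hdeq, inv_mul_cancel]
    have : d⁻¹ * e ∈ commutator E := ((hstem hker).2 : _)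
    simpa using mul_mem hdmem this
  set F' : Subgroup F := commutator F with hF'
  -- every element of E lifts to F'
  have hlift : ∀ e : E, ∃ f ∈ F', p f = e := by
    intro e
    have hmap : Subgroup.map p F' = ⊤ := by
      rw [hF', commutator_def, Subgroup.map_commutator, Subgroup.map_top_of_surjective p hp,
        ← commutator_def, hE]
    have hmem : e ∈ Subgroup.map p F' := by rw [hmap]; trivial
    exact Subgroup.mem_map.mp hmem
  -- F' is perfect (as a subgroup)
  have hperf : ⁅F', F'⁆ = F' := by
    refine le_antisymm (Subgroup.commutator_mono le_top le_top) ?_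
    rw [hF', commutator_def, Subgroup.commutator_le]
    intro a _ b _
    obtain ⟨a', ha'mem, ha'⟩ := hlift (p a)
    obtain ⟨b', hb'mem, hb'⟩ := hlift (p b)
    have hka : a'⁻¹ * a ∈ Subgroup.center F := by
      refine hcen ?_
      rw [MonoidHom.mem_ker, map_mul, map_inv, ha', inv_mul_cancel]
    have hkb : b'⁻¹ * b ∈ Subgroup.center F := by
      refine hcen ?_
      rw [MonoidHom.mem_ker, map_mul, map_inv, hb', inv_mul_cancel]
    have : ⁅a, b⁆ = ⁅a', b'⁆ := by
      conv_lhs => rw [show a = a' * (a'⁻¹ * a) by group, show b = b' * (b'⁻¹ * b) by group]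
      rw [comm_center_right _ _ _ hka, comm_center_left _ _ _ hkb]
    rw [this]
    exact Subgroup.commutator_mem_commutator ha'mem hb'mem
  -- the restriction to F'
  set p' : ↥F' →* E := p.comp F'.subtype with hp'def
  have hp'surj : Function.Surjective p' := by
    intro e
    obtain ⟨f, hf, he⟩ := hlift e
    exact ⟨⟨f, hf⟩, he⟩
  set φ : ↥F' →* G := π.comp p' with hφdef
  have hφsurj : Function.Surjective φ := hsurj.comp hp'surj
  -- commutator of ↥F' is ⊤
  have hcommtop : commutator ↥F' = ⊤ := by
    apply Subgroup.map_injective F'.subtype_injective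
    rw [commutator_def, Subgroup.map_commutator]
    have h1 : Subgroup.map F'.subtype ⊤ = F' := by
      rw [← MonoidHom.range_eq_map, Subgroup.range_subtype]
    rw [h1, hperf]
  -- kernel of φ is central in ↥F'
  have hφker : φ.ker ≤ Subgroup.center ↥F' ⊓ commutator ↥F' := by
    intro x hx
    refine Subgroup.mem_inf.mpr ⟨?_, by rw [hcommtop]; trivial⟩
    have hpx : p' x ∈ π.ker := hx
    have hpxc : p' x ∈ Subgroup.center E := (hstem hpx).1
    have hcentval : ∀ g : ↥F', ⁅(x : F), (g : F)⁆ ∈ Subgroup.center F := by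
      intro g
      refine hcen ?_
      rw [MonoidHom.mem_ker, map_commutatorElement]
      exact commutatorElement_eq_one_iff_mul_comm.mpr
        (Subgroup.mem_center_iff.mp hpxc (p g)).symm
    set cmap : ↥F' →* ↥(Subgroup.center F) :=
      { toFun := fun g => ⟨⁅(x : F), (g : F)⁆, hcentval g⟩
        map_one' := by
          refine Subtype.ext ?_
          simp
        map_mul' := by
          intro g h
          refine Subtype.ext ?_
          show ⁅(x : F), (g : F) * (h : F)⁆ = ⁅(x : F), (g : F)⁆ * ⁅(x : F), (h : F)⁆
          have key : ⁅(x : F), (g : F) * (h : F)⁆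
              = ⁅(x : F), (g : F)⁆ * ((g : F) * ⁅(x : F), (h : F)⁆ * (g : F)⁻¹) := by
            simp only [commutatorElement_def]
            group
          rw [key, Subgroup.mem_center_iff.mp (hcentval h) (g : F)]
          group } with hcmapdef
    have hkerc : commutator ↥F' ≤ cmap.ker := by
      rw [commutator_def, Subgroup.commutator_le]
      intro g _ h _
      rw [MonoidHom.mem_ker, map_commutatorElement]
      exact commutatorElement_eq_one_iff_mul_comm.mpr
        (Subtype.ext (Subgroup.mem_center_iff.mp (cmap h).2 (cmap g : F)))
    have hall : ∀ g : ↥F', ⁅(x : F), (g : F)⁆ = 1 := by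
      intro g
      have : cmap g = 1 := by
        have := hkerc (by rw [hcommtop]; trivial : g ∈ commutator ↥F')
        simpa [MonoidHom.mem_ker] using this
      have := congrArg Subtype.val this
      simpa [hcmapdef] using this
    rw [Subgroup.mem_center_iff]
    intro g
    refine Subtype.ext ?_
    have := commutatorElement_eq_one_iff_mul_comm.mp (hall g)
    exact this.symm
  -- cardinality forces p' to be injective
  have hcard : Nat.card ↥F' ≤ Nat.card E := hmax ↥F' φ hφsurj hφker
  have h1 : Nat.card ↥F' = Nat.card (↥F' ⧸ p'.ker) * Nat.card p'.ker :=
    Subgroup.card_eq_card_quotient_mul_card_subgroup _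
  have h2 : Nat.card (↥F' ⧸ p'.ker) = Nat.card E :=
    Nat.card_congr (QuotientGroup.quotientKerEquivOfSurjective p' hp'surj).toEquiv
  have hEpos : 0 < Nat.card E := Nat.card_pos
  have hkpos : 0 < Nat.card p'.ker := Nat.card_pos
  have hker1 : Nat.card p'.ker = 1 := by nlinarith [h1, h2, hcard, hEpos, hkpos]
  have hkerbot : p'.ker = ⊥ := Subgroup.card_eq_one.mp hker1
  have hinj : Function.Injective p' := (MonoidHom.ker_eq_bot_iff p').mp hkerbot
  let e : ↥F' ≃* E := MulEquiv.ofBijective p' ⟨hinj, hp'surj⟩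
  refine ⟨F'.subtype.comp e.symm.toMonoidHom, ?_⟩
  intro x
  show p' (e.symm x) = x
  have : p' (e.symm x) = e (e.symm x) := rfl
  rw [this, e.apply_symm_apply]

end Splitting

theorem schur_multiplier_aux
    {G E : Type} [Group G] [Finite G] [Group E] [Finite E]
    (hG : commutator G = ⊤)
    (π : E →* G) (hsurj : Function.Surjective π)
    (hstem : π.ker ≤ Subgroup.center E ⊓ commutator E)
    (hmax : ∀ (F : Type) [Group F] [Finite F] (π' : F →* G),
      Function.Surjective π' → π'.ker ≤ Subgroup.center F ⊓ commutator F →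
      Nat.card F ≤ Nat.card E) :
    ∀ β : E → E → ℂˣ, ((∀ x, β x 1 = 1 ∧ β 1 x = 1) ∧
      (∀ x y z, β x y * β (x * y) z = β y z * β x (y * z))) →
      ∃ f : E → ℂˣ, f 1 = 1 ∧ ∀ x y, β x y = f x * f y / f (x * y) := by
  classical
  rintro β ⟨hnorm, hcoc⟩
  letI : Fintype E := Fintype.ofFinite E
  set n : ℕ := Nat.card E with hn
  have hnpos : 0 < n := Nat.card_pos
  haveI : NeZero n := ⟨hnpos.ne'⟩
  set f : E → ℂˣ := fun x => ∏ y, β x y with hfdef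
  have hf1 : f 1 = 1 := by
    rw [hfdef]
    simp only []
    exact Finset.prod_eq_one fun y _ => (hnorm y).2
  have hpow : ∀ x y, β x y ^ n * f (x * y) = f x * f y := by
    intro x y
    have hcn : n = Fintype.card E := by rw [hn, Nat.card_eq_fintype_card]
    calc β x y ^ n * f (x * y) = ∏ z, (β x y * β (x * y) z) := by
          rw [Finset.prod_mul_distrib, Finset.prod_const, Finset.card_univ, ← hcn]
        _ = ∏ z, (β y z * β x (y * z)) := Finset.prod_congr rfl fun z _ => hcoc x y z
        _ = f y * ∏ z, β x (y * z) := Finset.prod_mul_distrib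
        _ = f x * f y := by
          rw [show (∏ z, β x (y * z)) = f x from
            Fintype.prod_equiv (Equiv.mulLeft y) _ _ (fun z => rfl)]
          exact mul_comm _ _
  have hroot : ∀ u : ℂˣ, ∃ v : ℂˣ, v ^ n = u := by
    intro u
    obtain ⟨z, hz⟩ := IsAlgClosed.exists_pow_nat_eq (u : ℂ) hnpos
    have hz0 : z ≠ 0 := by
      rintro rfl
      rw [zero_pow hnpos.ne'] at hz
      exact u.ne_zero hz.symm
    exact ⟨Units.mk0 z hz0, Units.ext (by simpa using hz)⟩
  choose g0 hg0 using fun x => hroot (f x)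
  set g : E → ℂˣ := fun x => g0 x / g0 1 with hgdef
  have hg1 : g 1 = 1 := div_self' _
  have hgpow : ∀ x, g x ^ n = f x := by
    intro x
    rw [hgdef]
    simp only [div_pow, hg0, hf1, div_one]
  set c : NCocycle E n :=
    { b := fun x y => β x y * (g (x * y) / (g x * g y))
      norm1 := by
        intro x
        simp [(hnorm x).1, hg1]
      norm2 := by
        intro x
        simp [(hnorm x).2, hg1]
      coc := by
        intro x y z
        have h := uval (hcoc x y z)
        rw [show x * (y * z) = x * y * z from (mul_assoc x y z).symm]
        refine Units.ext ?_
        push_cast at h ⊢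
        field_simp
        ring_nf
        ring_nf at h
        linear_combination h
      tors := by
        intro x y
        rw [mem_rootsOfUnity]
        rw [mul_pow, div_pow, mul_pow, hgpow, hgpow, hgpow]
        have h := uval (hpow x y)
        refine Units.ext ?_
        push_cast at h ⊢
        field_simp
        linear_combination h } with hcdef
  obtain ⟨s, hs⟩ := central_ext_splits hG π hsurj hstem hmax c.fst
    c.fst_surjective c.ker_fst_le_center
  have hbase : ∀ x, (s x).base = x := hs
  set h : E → ℂˣ := fun x => ((s x).fib : ℂˣ) with hhdef
  have hh1 : h 1 = 1 := by
    rw [hhdef]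
    simp only [map_one s]
    rfl
  have hmul : ∀ x y, h x * h y * c.b x y = h (x * y) := by
    intro x y
    have h2 : (s x).fib * (s y).fib
        * (⟨c.b (s x).base (s y).base, c.tors _ _⟩ : rootsOfUnity n ℂ)
        = (s (x * y)).fib := congrArg NCocycle.Tw.fib (map_mul s x y).symm
    have h3 := congrArg (fun t : rootsOfUnity n ℂ => ((t : ℂˣ) : ℂ)) h2
    rw [hhdef]
    refine Units.ext ?_
    push_cast at h3 ⊢
    rw [hbase, hbase] at h3
    exact h3
  refine ⟨fun x => g x / h x, by show g 1 / h 1 = 1; rw [hg1, hh1]; simp, ?_⟩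
  intro x y
  have hm := uval (hmul x y)
  simp only [hcdef] at hm
  refine Units.ext ?_
  push_cast at hm ⊢
  field_simp at hm ⊢
  linear_combination hm

theorem schur_multiplier_of_representation_group_trivial
    {G E : Type} [Group G] [Finite G] [Group E] [Finite E]
    (hG : commutator G = ⊤)
    (π : E →* G) (hsurj : Function.Surjective π)
    (hstem : π.ker ≤ Subgroup.center E ⊓ commutator E)
    (hmax : ∀ (F : Type) [Group F] [Finite F] (π' : F →* G),
      Function.Surjective π' → π'.ker ≤ Subgroup.center F ⊓ commutator F →
      Nat.card F ≤ Nat.card E) :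
    ∀ β : E → E → ℂˣ, Is2Cocycle β → Is2Coboundary β := by
  intro β hβ
  exact schur_multiplier_aux hG π hsurj hstem hmax β hβ
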